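/- Let (Ω, P) be a probability space and let X₀, X₁, X₂, … : Ω → ℝ be independent and identically distributed real random variables with E[Xᵢ] = 0 and E[Xᵢ²] = 1. Let γ : ℕ → ℕ → ℝ be a triangular array of fixed weights with Γₙ := √(∑_{i=0}^{n−1} γ(n,i)²) > 0 for all n, and suppose (max_{0 ≤ i < n} |γ(n,i)|) / Γₙ → 0 as n → ∞. Then the triangular array Q(n,i) := (γ(n,i) / Γₙ) · Xᵢ satisfies the Lindeberg condition: for every ε > 0, ∑_{i=0}^{n−1} E[ Q(n,i)² · 1{|Q(n,i)| > ε} ] → 0 as n → ∞; equivalently, Γₙ⁻² · ∑_{i=0}^{n−1} E[ γ(n,i)² Xᵢ² · 1{|γ(n,i) Xᵢ| > ε Γₙ} ] → 0. -/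

import Mathlib

open MeasureTheory ProbabilityTheory Filter

/-- **Lindeberg condition for the weighted dummy array.**
For i.i.d. standardized random variables `X i` and a triangular array of fixed weights `γ`
with `Γ n = √(∑_{i<n} γ n i ^ 2) > 0` and `(max_{i<n} |γ n i|)/Γ n → 0`, the array
`Q n i := (γ n i / Γ n) * X i` satisfies the Lindeberg condition: for every `ε > 0`,
`∑_{i<n} E[(Q n i)² · 1{|Q n i| > ε}] → 0` as `n → ∞`. -/
theorem lindeberg_condition_weighted_array
    {Ω : Type*} [MeasurableSpace Ω] (P : Measure Ω) [IsProbabilityMeasure P]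
    (X : ℕ → Ω → ℝ)
    (hmeas : ∀ i, Measurable (X i))
    (hindep : iIndepFun X P)
    (hident : ∀ i, IdentDistrib (X i) (X 0) P P)
    (hL2 : ∀ i, MemLp (X i) 2 P)
    (hmean : ∀ i, ∫ ω, X i ω ∂P = 0)
    (hvar : ∀ i, ∫ ω, (X i ω) ^ 2 ∂P = 1)
    (γ : ℕ → ℕ → ℝ)
    (Γ : ℕ → ℝ)
    (hΓ : ∀ n, Γ n = Real.sqrt (∑ i ∈ Finset.range n, (γ n i) ^ 2))
    (hΓpos : ∀ n, 1 ≤ n → 0 < Γ n)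
    (hmax : ∀ ε > (0 : ℝ), ∀ᶠ n in atTop, ∀ i < n, |γ n i| < ε * Γ n)
    (Q : ℕ → ℕ → Ω → ℝ)
    (hQ : ∀ n i ω, Q n i ω = (γ n i / Γ n) * X i ω) :
    ∀ ε > (0 : ℝ),
      Tendsto
        (fun n => ∑ i ∈ Finset.range n,
          ∫ ω, (Q n i ω) ^ 2 * Set.indicator {ω' | ε < |Q n i ω'|} (fun _ => (1 : ℝ)) ω ∂P)
        atTop (nhds 0) := by
  intro ε hε
  -- the truncation function
  set g : ℝ → ℝ → ℝ := fun c x => x ^ 2 * Set.indicator {y : ℝ | c < |y|} (fun _ => 1) x with hg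
  have hgmeas : ∀ c, Measurable (g c) := by
    intro c
    have hs : MeasurableSet {y : ℝ | c < |y|} :=
      measurableSet_lt measurable_const measurable_abs
    exact (measurable_id.pow_const 2).mul
      ((measurable_const.indicator hs))
  have hgnonneg : ∀ c x, 0 ≤ g c x := by
    intro c x
    apply mul_nonneg (sq_nonneg _)
    exact Set.indicator_nonneg (fun _ _ => zero_le_one) _
  have hgle : ∀ c x, g c x ≤ x ^ 2 := by
    intro c x
    have : Set.indicator {y : ℝ | c < |y|} (fun _ => (1:ℝ)) x ≤ 1 :=
      Set.indicator_le_self' (fun _ _ => zero_le_one) x |>.trans_eq rfl |>.trans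
        (by by_cases h : x ∈ {y : ℝ | c < |y|} <;> simp [h])
    calc g c x ≤ x ^ 2 * 1 := by
          apply mul_le_mul_of_nonneg_left _ (sq_nonneg x)
          by_cases h : x ∈ {y : ℝ | c < |y|} <;> simp [g, h]
      _ = x ^ 2 := mul_one _
  -- integrability of the composition
  have hint : ∀ (i : ℕ) (c : ℝ), Integrable (fun ω => g c (X i ω)) P := by
    intro i c
    refine Integrable.mono' ((hL2 i).integrable_sq) (((hgmeas c).comp (hmeas i)).aestronglyMeasurable) ?_
    refine Filter.Eventually.of_forall fun ω => ?_
    rw [Real.norm_eq_abs, abs_of_nonneg (hgnonneg _ _)]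
    exact hgle _ _
  -- identical distribution gives equal integrals
  have heq : ∀ (i : ℕ) (c : ℝ),
      ∫ ω, g c (X i ω) ∂P = ∫ ω, g c (X 0 ω) ∂P := by
    intro i c
    exact ((hident i).comp (hgmeas c)).integral_eq
  -- the tail function tends to 0
  have hf : Tendsto (fun c => ∫ ω, g c (X 0 ω) ∂P) atTop (nhds 0) := by
    have h0 : (0 : ℝ) = ∫ ω, (0 : ℝ) ∂P := by simp
    rw [h0]
    refine tendsto_integral_filter_of_dominated_convergence
      (fun ω => (X 0 ω) ^ 2) ?_ ?_ ((hL2 0).integrable_sq) ?_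
    · exact Filter.Eventually.of_forall fun c =>
        (((hgmeas c).comp (hmeas 0)).aestronglyMeasurable)
    · refine Filter.Eventually.of_forall fun c => Filter.Eventually.of_forall fun ω => ?_
      rw [Real.norm_eq_abs, abs_of_nonneg (hgnonneg _ _)]
      exact hgle _ _
    · refine Filter.Eventually.of_forall fun ω => ?_
      have : ∀ᶠ c in atTop, g c (X 0 ω) = 0 := by
        filter_upwards [eventually_ge_atTop (|X 0 ω|)] with c hc
        have : X 0 ω ∉ {y : ℝ | c < |y|} := by simpa using hc
        simp [g, Set.indicator_of_notMem this]
      exact Tendsto.congr' (this.mono fun c h => h.symm) tendsto_const_nhds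
  rw [NormedAddCommGroup.tendsto_nhds_zero]
  intro η hη
  -- choose the cutoff
  obtain ⟨C, hC⟩ := (Filter.eventually_atTop.mp (hf.eventually_lt_const hη))
  have hM : (0:ℝ) < max C 1 := lt_of_lt_of_le one_pos (le_max_right _ _)
  set δ : ℝ := ε / max C 1 with hδ
  have hδpos : 0 < δ := div_pos hε hM
  have hεδ : ε / δ = max C 1 := by
    rw [hδ, div_div_eq_mul_div]; exact mul_div_cancel_left₀ _ hε.ne'
  have hFlt : ∫ ω, g (ε / δ) (X 0 ω) ∂P < η := by
    rw [hεδ]; exact hC _ (le_max_left _ _)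
  filter_upwards [hmax δ hδpos, eventually_ge_atTop 1] with n hn hn1
  have hΓn : 0 < Γ n := hΓpos n hn1
  -- nonnegativity of each term
  have hterm_nonneg : ∀ i, 0 ≤ ∫ ω, (Q n i ω) ^ 2 *
      Set.indicator {ω' | ε < |Q n i ω'|} (fun _ => (1 : ℝ)) ω ∂P := by
    intro i
    refine integral_nonneg fun ω => ?_
    exact mul_nonneg (sq_nonneg _) (Set.indicator_nonneg (fun _ _ => zero_le_one) _)
  -- term bound
  have hterm_le : ∀ i ∈ Finset.range n,
      (∫ ω, (Q n i ω) ^ 2 * Set.indicator {ω' | ε < |Q n i ω'|} (fun _ => (1 : ℝ)) ω ∂P)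
        ≤ (γ n i / Γ n) ^ 2 * ∫ ω, g (ε / δ) (X 0 ω) ∂P := by
    intro i hi
    rw [Finset.mem_range] at hi
    have hγδ : |γ n i / Γ n| < δ := by
      rw [abs_div, abs_of_pos hΓn, div_lt_iff₀ hΓn]
      exact hn i hi
    have hptwise : ∀ ω, (Q n i ω) ^ 2 * Set.indicator {ω' | ε < |Q n i ω'|} (fun _ => (1 : ℝ)) ω
        ≤ (γ n i / Γ n) ^ 2 * g (ε / δ) (X i ω) := by
      intro ω
      by_cases hA : ω ∈ {ω' | ε < |Q n i ω'|}
      · have hA' : ε < |Q n i ω| := hA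
        have hq : |Q n i ω| = |γ n i / Γ n| * |X i ω| := by
          rw [hQ, abs_mul]
        have hxB : X i ω ∈ {y : ℝ | ε / δ < |y|} := by
          have h1 : ε < δ * |X i ω| := by
            have h2 : |γ n i / Γ n| * |X i ω| ≤ δ * |X i ω| :=
              mul_le_mul_of_nonneg_right hγδ.le (abs_nonneg _)
            calc ε < |Q n i ω| := hA'
              _ = |γ n i / Γ n| * |X i ω| := hq
              _ ≤ δ * |X i ω| := h2
          show ε / δ < |X i ω|
          rw [div_lt_iff₀ hδpos, mul_comm]
          exact h1
        rw [Set.indicator_of_mem hA]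
        simp only [g, Set.indicator_of_mem hxB]
        rw [hQ]
        ring_nf
        exact le_refl _
      · rw [Set.indicator_of_notMem hA, mul_zero]
        exact mul_nonneg (sq_nonneg _) (hgnonneg _ _)
    calc (∫ ω, (Q n i ω) ^ 2 * Set.indicator {ω' | ε < |Q n i ω'|} (fun _ => (1 : ℝ)) ω ∂P)
        ≤ ∫ ω, (γ n i / Γ n) ^ 2 * g (ε / δ) (X i ω) ∂P := by
          refine integral_mono_of_nonneg ?_ ((hint i (ε/δ)).const_mul _) ?_
          · exact Filter.Eventually.of_forall fun ω =>
              mul_nonneg (sq_nonneg _) (Set.indicator_nonneg (fun _ _ => zero_le_one) _)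
          · exact Filter.Eventually.of_forall hptwise
      _ = (γ n i / Γ n) ^ 2 * ∫ ω, g (ε / δ) (X i ω) ∂P := integral_const_mul _ _
      _ = (γ n i / Γ n) ^ 2 * ∫ ω, g (ε / δ) (X 0 ω) ∂P := by rw [heq]
  -- sum up
  have hsum_le : (∑ i ∈ Finset.range n,
      ∫ ω, (Q n i ω) ^ 2 * Set.indicator {ω' | ε < |Q n i ω'|} (fun _ => (1 : ℝ)) ω ∂P)
      ≤ ∫ ω, g (ε / δ) (X 0 ω) ∂P := by
    calc (∑ i ∈ Finset.range n,
        ∫ ω, (Q n i ω) ^ 2 * Set.indicator {ω' | ε < |Q n i ω'|} (fun _ => (1 : ℝ)) ω ∂P)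
        ≤ ∑ i ∈ Finset.range n, (γ n i / Γ n) ^ 2 * ∫ ω, g (ε / δ) (X 0 ω) ∂P :=
          Finset.sum_le_sum hterm_le
      _ = (∑ i ∈ Finset.range n, (γ n i) ^ 2) / (Γ n) ^ 2 * ∫ ω, g (ε / δ) (X 0 ω) ∂P := by
          rw [← Finset.sum_mul, Finset.sum_div]
          congr 1
          exact Finset.sum_congr rfl fun i _ => by rw [div_pow]
      _ = ∫ ω, g (ε / δ) (X 0 ω) ∂P := by
          have hΓsq : (Γ n) ^ 2 = ∑ i ∈ Finset.range n, (γ n i) ^ 2 := by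
            rw [hΓ n, Real.sq_sqrt (Finset.sum_nonneg fun i _ => sq_nonneg _)]
          rw [hΓsq, ← hΓsq, div_self (pow_ne_zero 2 hΓn.ne'), one_mul]
  have hsum_nonneg : 0 ≤ ∑ i ∈ Finset.range n,
      ∫ ω, (Q n i ω) ^ 2 * Set.indicator {ω' | ε < |Q n i ω'|} (fun _ => (1 : ℝ)) ω ∂P :=
    Finset.sum_nonneg fun i _ => hterm_nonneg i
  rw [Real.norm_eq_abs, abs_of_nonneg hsum_nonneg]
  exact lt_of_le_of_lt hsum_le hFlt
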